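/- With balanced classes, if Σ_1 is block-diagonal with blocks αI_q and δI_{p-q} (0 < δ < α) and Σ_2 = αI_p, then the PCA projection W (onto the top-q eigenvectors of Σ_1 + Σ_2, i.e. the first q coordinates) yields identical embedded distributions N(0, αI_q) for both classes, so the embedded Bayes risk equals 1/2. -/

import Mathlib

open Matrix MeasureTheory

/-- Density of the multivariate Gaussian `N(m, S)` on `ℝ^q`. -/
noncomputable def gaussPdf {q : ℕ} (m : Fin q → ℝ) (S : Matrix (Fin q) (Fin q) ℝ)
    (v : Fin q → ℝ) : ℝ :=
  (2 * Real.pi) ^ (-(q : ℝ) / 2) * S.det ^ (-(1 : ℝ) / 2) *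
    Real.exp (-(1 / 2) * ((v - m) ⬝ᵥ S⁻¹.mulVec (v - m)))

/-- The Gaussian density with covariance `α • 1` (`α > 0`) integrates to `1`. -/
lemma gaussPdf_smul_one_integral {q : ℕ} (α : ℝ) (hα : 0 < α) :
    ∫ v : Fin q → ℝ, gaussPdf 0 (α • (1 : Matrix (Fin q) (Fin q) ℝ)) v = 1 := by
  have hα' : α ≠ 0 := ne_of_gt hα
  have hinv : (α • (1 : Matrix (Fin q) (Fin q) ℝ))⁻¹ = α⁻¹ • 1 := by
    apply Matrix.inv_eq_right_inv
    rw [Matrix.smul_mul, Matrix.mul_smul, Matrix.one_mul, smul_smul, mul_inv_cancel₀ hα', one_smul]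
  have hdet : (α • (1 : Matrix (Fin q) (Fin q) ℝ)).det = α ^ q := by
    simp [Matrix.det_smul]
  have hpdf : ∀ v : Fin q → ℝ, gaussPdf 0 (α • (1 : Matrix (Fin q) (Fin q) ℝ)) v
      = ((2 * Real.pi * α) ^ (-(q : ℝ) / 2)) * ∏ i, Real.exp (-(2*α)⁻¹ * (v i)^2) := by
    intro v
    rw [gaussPdf, hinv, hdet]
    have h1 : (α ^ q : ℝ) ^ (-(1:ℝ)/2) = α ^ (-(q:ℝ)/2) := by
      rw [← Real.rpow_natCast α q, ← Real.rpow_mul hα.le]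
      ring_nf
    have h2 : (2 * Real.pi * α) ^ (-(q : ℝ) / 2)
        = (2 * Real.pi) ^ (-(q : ℝ) / 2) * α ^ (-(q:ℝ)/2) :=
      Real.mul_rpow (by positivity) hα.le
    rw [h1, h2]
    congr 1
    rw [← Real.exp_sum]
    congr 1
    simp only [sub_zero, Matrix.smul_mulVec, Matrix.one_mulVec, dotProduct, Pi.smul_apply,
      smul_eq_mul, Finset.mul_sum]
    refine Finset.sum_congr rfl fun i _ => ?_
    have : (0:ℝ) < 2 * α := by positivity
    field_simp
  simp_rw [hpdf]
  rw [integral_const_mul, volume_pi, integral_fintype_prod_eq_pow (ι := Fin q)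
    (fun x : ℝ => Real.exp (-(2*α)⁻¹ * x^2))]
  rw [integral_gaussian, Fintype.card_fin]
  have ht : (0:ℝ) < 2 * Real.pi * α := by positivity
  have h3 : Real.pi / (2*α)⁻¹ = 2 * Real.pi * α := by field_simp
  rw [h3]
  rw [Real.sqrt_eq_rpow, ← Real.rpow_natCast _ q, ← Real.rpow_mul ht.le,
    ← Real.rpow_add ht]
  have : -(q:ℝ) / 2 + 1 / 2 * (q:ℝ) = 0 := by ring
  rw [this, Real.rpow_zero]

/-- Example 2 of the paper: with `S1 = diag(αI_q, δI_{p-q})`, `S2 = αI_p` and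
the PCA projection `W` onto the first `q` coordinates, the two embedded
distributions coincide (`N(0, αI_q)`), so the embedded Bayes risk equals
`1/2`. -/
theorem embedded_bayes_risk_example_no_upper_bound
    {p q : ℕ} (hq0 : 0 < q) (hq : 2 * q ≤ p) (α δ : ℝ) (hδ : 0 < δ) (hδα : δ < α)
    (S1 : Matrix (Fin p) (Fin p) ℝ)
    (hS1 : S1 = Matrix.of fun i j : Fin p =>
      if i = j then (if (i : ℕ) < q then α else δ) else 0)
    (S2 : Matrix (Fin p) (Fin p) ℝ)
    (hS2 : S2 = α • (1 : Matrix (Fin p) (Fin p) ℝ))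
    (W : Matrix (Fin p) (Fin q) ℝ)
    (hW : W = Matrix.of fun (i : Fin p) (j : Fin q) =>
      if (i : ℕ) = (j : ℕ) then (1 : ℝ) else 0) :
    Wᵀ * S1 * W = α • (1 : Matrix (Fin q) (Fin q) ℝ)
    ∧ Wᵀ * S2 * W = α • (1 : Matrix (Fin q) (Fin q) ℝ)
    ∧ ∫ v, min ((1 / 2 : ℝ) * gaussPdf 0 (Wᵀ * S1 * W) v)
        ((1 / 2 : ℝ) * gaussPdf 0 (Wᵀ * S2 * W) v) = 1 / 2 := by
  have hα : 0 < α := hδ.trans hδα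
  have hqp : q ≤ p := le_trans (Nat.le_mul_of_pos_left q two_pos) hq
  have hW' : W = Matrix.of fun i j => if i = Fin.castLE hqp j then (1:ℝ) else 0 := by
    rw [hW]; ext i j
    simp only [Matrix.of_apply]
    congr 1
    simp [Fin.ext_iff]
  have hcast : ∀ a b : Fin q, (Fin.castLE hqp a = Fin.castLE hqp b) ↔ a = b := by
    intro a b
    constructor
    · intro h; exact Fin.ext (by simpa [Fin.ext_iff] using h)
    · rintro rfl; rfl
  have h1 : Wᵀ * S1 * W = α • (1 : Matrix (Fin q) (Fin q) ℝ) := by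
    subst hS1; rw [hW']; ext a b
    simp only [Matrix.mul_apply, Matrix.transpose_apply, Matrix.of_apply, Matrix.smul_apply,
      Matrix.one_apply, mul_ite, ite_mul, zero_mul, mul_zero, mul_one, one_mul, smul_eq_mul,
      Finset.sum_ite_eq, Finset.sum_ite_eq', Finset.mem_univ, if_true]
    have hb : ((Fin.castLE hqp b : Fin p) : ℕ) < q := b.isLt
    rcases eq_or_ne a b with h | h
    · simp [h, hb]
    · simp [h, hb, hcast, Ne.symm h]
  have h2 : Wᵀ * S2 * W = α • (1 : Matrix (Fin q) (Fin q) ℝ) := by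
    subst hS2; rw [hW']; ext a b
    simp only [Matrix.mul_apply, Matrix.transpose_apply, Matrix.of_apply, Matrix.smul_apply,
      Matrix.one_apply, mul_ite, ite_mul, zero_mul, mul_zero, mul_one, one_mul, smul_eq_mul,
      Finset.sum_ite_eq, Finset.sum_ite_eq', Finset.mem_univ, if_true]
    rcases eq_or_ne a b with h | h
    · simp [h]
    · simp [h, hcast, Ne.symm h]
  refine ⟨h1, h2, ?_⟩
  rw [h1, h2]
  simp_rw [min_self]
  rw [integral_const_mul, gaussPdf_smul_one_integral α hα, mul_one]
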